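/- Let P and Q be permutations of {1, …, n} with identical buffer sequences, i.e. B_{P,i} = B_{Q,i} for all 1 ≤ i ≤ n. Then for every index i with B_{P,i} ≤ B_{P,i−1} one has P_i = Q_i = ACK_{P,i−1}; that is, all permutations with a given buffer sequence agree, at every position where the buffer does not grow, on the received packet ID, which is the smallest ID not received so far. -/
import Mathlib


/-- `ACK A i` is the acknowledgement after the first `i` packets of the 1-indexed
sequence `A`: the least positive integer not among `A 1, …, A i`.
In particular `ACK A 0 = 1`. -/
noncomputable def ACK (A : ℕ → ℕ) (i : ℕ) : ℕ :=
  sInf {k : ℕ | 0 < k ∧ ∀ j, 1 ≤ j → j ≤ i → A j ≠ k}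

/-- `bufSize A i` is the buffer size after the first `i` packets of the 1-indexed
sequence `A`: the number of distinct values among `A 1, …, A i` that are
`≥ ACK A i`. In particular `bufSize A 0 = 0`. -/
noncomputable def bufSize (A : ℕ → ℕ) (i : ℕ) : ℕ :=
  (((Finset.Icc 1 i).image A).filter (fun v => ACK A i ≤ v)).card

/-- `A` (1-indexed) is a permutation of `{1, …, n}`: every integer in `{1, …, n}`
occurs exactly once among `A 1, …, A n`. -/
def IsPermSeq (n : ℕ) (A : ℕ → ℕ) : Prop :=
  Set.BijOn A (Set.Icc 1 n) (Set.Icc 1 n)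

lemma ack_spec {n : ℕ} {A : ℕ → ℕ} (hA : IsPermSeq n A) {i : ℕ} (hi : i ≤ n) :
    0 < ACK A i ∧ ∀ j, 1 ≤ j → j ≤ i → A j ≠ ACK A i := by
  have hne : {k : ℕ | 0 < k ∧ ∀ j, 1 ≤ j → j ≤ i → A j ≠ k}.Nonempty := by
    refine ⟨n + 1, Nat.succ_pos n, fun j h1 h2 hEq => ?_⟩
    have h3 := hA.mapsTo ⟨h1, h2.trans hi⟩
    simp only [Set.mem_Icc] at h3
    omega
  exact Nat.sInf_mem hne

lemma lt_ack {n : ℕ} {A : ℕ → ℕ} (hA : IsPermSeq n A) {i : ℕ} (hi : i ≤ n)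
    {m : ℕ} (hm : 1 ≤ m) (hlt : m < ACK A i) :
    ∃ j, 1 ≤ j ∧ j ≤ i ∧ A j = m := by
  by_contra h
  push_neg at h
  have : m ∈ {k : ℕ | 0 < k ∧ ∀ j, 1 ≤ j → j ≤ i → A j ≠ k} :=
    ⟨hm, fun j h1 h2 => h j h1 h2⟩
  have h2 : ACK A i ≤ m := Nat.sInf_le this
  omega

lemma buf_eq {n : ℕ} {A : ℕ → ℕ} (hA : IsPermSeq n A) {i : ℕ} (hi : i ≤ n) :
    bufSize A i + ACK A i = i + 1 := by
  set T := (Finset.Icc 1 i).image A with hT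
  have hcard : T.card = i := by
    rw [hT, Finset.card_image_of_injOn, Nat.card_Icc]
    · omega
    · intro x hx y hy hxy
      simp only [Finset.coe_Icc, Set.mem_Icc] at hx hy
      exact hA.injOn ⟨hx.1, hx.2.trans hi⟩ ⟨hy.1, hy.2.trans hi⟩ hxy
  have hfilt : T.filter (fun v => ¬ ACK A i ≤ v) = Finset.Icc 1 (ACK A i - 1) := by
    ext v
    simp only [Finset.mem_filter, hT, Finset.mem_image, Finset.mem_Icc, not_le]
    constructor
    · rintro ⟨⟨j, ⟨hj1, hj2⟩, rfl⟩, hv⟩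
      have h3 := hA.mapsTo ⟨hj1, hj2.trans hi⟩
      simp only [Set.mem_Icc] at h3
      omega
    · rintro ⟨hv1, hv2⟩
      have hack := (ack_spec hA hi).1
      obtain ⟨j, hj1, hj2, hje⟩ := lt_ack hA hi hv1 (by omega)
      exact ⟨⟨j, ⟨hj1, hj2⟩, hje⟩, by omega⟩
  have := Finset.card_filter_add_card_filter_not
    (s := T) (p := fun v => ACK A i ≤ v)
  rw [hfilt, hcard, Nat.card_Icc] at this
  have hack := (ack_spec hA hi).1
  unfold bufSize
  rw [← hT]
  omega

/-- All permutations of `{1, …, n}` with a given buffer sequence agree, at every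
position where the buffer does not grow, on the received packet ID, which is the
smallest ID not received so far. -/
theorem buffer_equiv_forces_ids (n : ℕ) (P Q : ℕ → ℕ)
    (hP : IsPermSeq n P) (hQ : IsPermSeq n Q)
    (hbuf : ∀ i, 1 ≤ i → i ≤ n → bufSize P i = bufSize Q i) :
    ∀ i, 1 ≤ i → i ≤ n → bufSize P i ≤ bufSize P (i - 1) →
      P i = ACK P (i - 1) ∧ Q i = ACK P (i - 1) := by
  intro i h1 hi hdrop
  have hi1 : i - 1 ≤ n := by omega
  have ePm := buf_eq hP hi1
  have ePi := buf_eq hP hi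
  have eQm := buf_eq hQ hi1
  have eQi := buf_eq hQ hi
  have hbufi := hbuf i h1 hi
  have pP := (ack_spec hP hi1).1
  have pQ := (ack_spec hQ hi1).1
  have hbufm : bufSize P (i - 1) = bufSize Q (i - 1) := by
    rcases Nat.eq_or_lt_of_le h1 with h | h
    · have : i - 1 = 0 := by omega
      rw [this] at ePm eQm ⊢
      have pP0 : 0 < ACK P 0 := this ▸ pP
      have pQ0 : 0 < ACK Q 0 := this ▸ pQ
      omega
    · exact hbuf (i - 1) (by omega) (by omega)
  have hQP : ACK Q (i - 1) = ACK P (i - 1) := by omega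
  have hQPi : ACK Q i = ACK P i := by omega
  have hltP : ACK P (i - 1) < ACK P i := by omega
  have hltQ : ACK Q (i - 1) < ACK Q i := by omega
  constructor
  · obtain ⟨j, hj1, hj2, hje⟩ := lt_ack hP hi pP hltP
    have hji : j = i := by
      by_contra h
      exact (ack_spec hP hi1).2 j hj1 (by omega) hje
    rw [hji] at hje; exact hje
  · obtain ⟨j, hj1, hj2, hje⟩ := lt_ack hQ hi (hQP ▸ pP) (hQP ▸ hltQ)
    have hji : j = i := by
      by_contra h
      exact (ack_spec hQ hi1).2 j hj1 (by omega) hje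
    rw [hji, hQP] at hje; exact hje
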